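/- Let v and x be purely imaginary octonions with ⟨v,x⟩ = 0. Then left multiplications by v and x anticommute: for every octonion y, v·(x·y) = −x·(v·y), i.e. L_v ∘ L_x = −L_x ∘ L_v. -/

import Mathlib

noncomputable section

/-- The octonions, realized as pairs of real quaternions (Cayley–Dickson construction). -/
abbrev Octonion : Type := Quaternion ℝ × Quaternion ℝ

/-- Octonion multiplication: `(a,b)·(c,d) = (a·c − conj(d)·b, d·a + b·conj(c))`. -/
def omul (x y : Octonion) : Octonion :=
  (x.1 * y.1 - star y.2 * x.2, y.2 * x.1 + x.2 * star y.1)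

/-- Octonion conjugation: `conj (a,b) = (conj a, −b)`. -/
def oconj (x : Octonion) : Octonion := (star x.1, -x.2)

/-- The unit octonion `1 = (1,0)`. -/
def oone : Octonion := (1, 0)

/-- The real inner product `⟨(a,b),(c,d)⟩ = Re(a·conj c) + Re(b·conj d)` on the octonions. -/
def oinner (x y : Octonion) : ℝ := (x.1 * star y.1).re + (x.2 * star y.2).re

/-- Left multiplications by orthogonal purely imaginary octonions
anticommute: if `⟨v,1⟩ = ⟨x,1⟩ = 0` and `⟨v,x⟩ = 0`, then
`v·(x·y) = −x·(v·y)` for every octonion `y`. -/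
theorem left_mul_anticommute (v x : Octonion)
    (hv : oinner v oone = 0) (hx : oinner x oone = 0) (hvx : oinner v x = 0) :
    ∀ y : Octonion, omul v (omul x y) = -(omul x (omul v y)) := by
  obtain ⟨a, b⟩ := v
  obtain ⟨c, d⟩ := x
  simp only [oinner, oone] at hv hx hvx
  simp only [star_one, mul_one, star_zero, mul_zero, Quaternion.re_zero, add_zero] at hv hx
  have ha : star a = -a := Quaternion.star_eq_neg.mpr hv
  have hc : star c = -c := Quaternion.star_eq_neg.mpr hx
  have K : a * c + c * a = b * star d + d * star b := by
    have h1 : a * star c + star (a * star c) = ((2 * (a * star c).re : ℝ) : Quaternion ℝ) :=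
      Quaternion.self_add_star' _
    have h2 : b * star d + star (b * star d) = ((2 * (b * star d).re : ℝ) : Quaternion ℝ) :=
      Quaternion.self_add_star' _
    have hsum : (2 * (a * star c).re + 2 * (b * star d).re : ℝ) = 0 := by linarith
    have h : (a * star c + star (a * star c)) + (b * star d + star (b * star d)) = 0 := by
      rw [h1, h2, ← Quaternion.coe_add, hsum, Quaternion.coe_zero]
    simp only [star_mul, star_star, star_neg, ha, hc, neg_neg, mul_neg, neg_mul] at h
    linear_combination (norm := noncomm_ring) -h
  set r : ℝ := 2 * (b * star d).re with hr
  have hK2 : b * star d + d * star b = (r : Quaternion ℝ) := by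
    have := Quaternion.self_add_star' (b * star d)
    rwa [star_mul, star_star] at this
  have hK1 : a * c + c * a = (r : Quaternion ℝ) := K.trans hK2
  have hK3 : star d * b + star b * d = (r : Quaternion ℝ) := by
    have h := Quaternion.star_add_self' (star b * d)
    rw [star_mul, star_star] at h
    rw [h]
    congr 1
    rw [hr]
    congr 1
    simp only [Quaternion.re_mul, Quaternion.re_star, Quaternion.imI_star,
      Quaternion.imJ_star, Quaternion.imK_star]
    ring
  rintro ⟨e, f⟩
  simp only [omul, Prod.neg_mk, Prod.mk.injEq]
  constructor
  · rw [eq_neg_iff_add_eq_zero]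
    simp only [star_add, star_mul, star_star, ha, hc]
    have expand : a * (c * e - star f * d) - (-c * star f + e * star d) * b +
        (c * (a * e - star f * b) - (-a * star f + e * star b) * d) =
        (a * c + c * a) * e - e * (star d * b + star b * d) := by noncomm_ring
    rw [expand, hK1, hK3, Quaternion.coe_commutes, sub_self]
  · rw [eq_neg_iff_add_eq_zero]
    simp only [star_sub, star_mul, star_star, ha, hc]
    have expand : (f * c + d * star e) * a + b * (star e * -c - star d * f) +
        ((f * a + b * star e) * c + d * (star e * -a - star b * f)) =
        f * (a * c + c * a) - (b * star d + d * star b) * f := by noncomm_ring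
    rw [expand, hK1, hK2, Quaternion.coe_commutes, sub_self]
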